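/- In the complete lattice S_A of soft sets over U with finite domain A (ordered by pointwise reverse inclusion), if X ⊆ S_{f,A} is directed and (F,A) ∈ S_{f,A} satisfies (F,A) ≤ sup X, then there exists (G,A) ∈ X with (F,A) ≤ (G,A). -/

import Mathlib

/-- For a fixed parameter set `A`, a soft set with domain `A` over `U` is a map
`F : A → P(U)`.  The induced order is pointwise reverse inclusion:
`F ≤ G` iff `G e ⊆ F e` for all `e ∈ A`. -/
def sle {U E : Type*} {A : Set E} (F G : ↥A → Set U) : Prop :=
  ∀ e, G e ⊆ F e

/-- Suprema in `S_A` are given by pointwise intersection. -/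
def supFun {U E : Type*} {A : Set E} (X : Set (↥A → Set U)) : ↥A → Set U :=
  fun e => ⋂ G ∈ X, G e

theorem finset_upper {U E : Type*} {A : Set E} (X : Set (↥A → Set U))
    (hne : X.Nonempty) (hdir : DirectedOn sle X)
    (S : Set (↥A → Set U)) (hS : S.Finite) :
    S ⊆ X → ∃ H ∈ X, ∀ g ∈ S, sle g H := by
  refine Set.Finite.induction_on (motive := fun S _ => S ⊆ X → ∃ H ∈ X, ∀ g ∈ S, sle g H) S hS ?_ ?_
  · intro _
    obtain ⟨H, hH⟩ := hne
    exact ⟨H, hH, fun g hg => hg.elim⟩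
  · intro a s hx hf ih hsub
    obtain ⟨H, hHX, hH⟩ := ih (fun g hg => hsub (Set.mem_insert_of_mem _ hg))
    obtain ⟨K, hKX, hKa, hKH⟩ := hdir a (hsub (Set.mem_insert _ _)) H hHX
    refine ⟨K, hKX, fun g hg => ?_⟩
    rcases hg with rfl | hg
    · exact hKa
    · exact fun e => (hKH e).trans (hH g hg e)

theorem compactness {U E : Type*} {A : Set E} (hA : A.Finite)
    (X : Set (↥A → Set U))
    (hXf : ∀ G ∈ X, ∀ e, (Set.univ \ G e).Finite)
    (hne : X.Nonempty) (hdir : DirectedOn sle X)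
    (F : ↥A → Set U) (hF : ∀ e, (Set.univ \ F e).Finite)
    (hle : sle F (supFun X)) :
    ∃ G ∈ X, sle F G := by
  classical
  have : Finite ↥A := hA.to_subtype
  set P : Set (↥A × U) := {p | p.2 ∉ F p.1} with hPdef
  have hP : P.Finite := by
    have hsub : P ⊆ ⋃ e : ↥A, ({e} ×ˢ (Set.univ \ F e)) := by
      intro p hp
      exact Set.mem_iUnion.2 ⟨p.1, ⟨rfl, ⟨trivial, hp⟩⟩⟩
    exact (Set.finite_iUnion fun e => (Set.finite_singleton e).prod (hF e)).subset hsub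
  have hchoice : ∀ p : ↥A × U, p ∈ P → ∃ G ∈ X, p.2 ∉ G p.1 := by
    intro p hp
    by_contra h
    push_neg at h
    exact hp (hle p.1 (Set.mem_iInter₂.2 fun G hG => h G hG))
  choose! G hGX hGp using hchoice
  obtain ⟨H, hHX, hH⟩ := finset_upper X hne hdir (G '' P) (hP.image G)
    (by rintro _ ⟨p, hp, rfl⟩; exact hGX p hp)
  refine ⟨H, hHX, fun e x hx => ?_⟩
  by_contra hxF
  have hp : (e, x) ∈ P := hxF
  exact hGp (e, x) hp (hH (G (e, x)) ⟨(e, x), hp, rfl⟩ e hx)
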